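/- arXiv:1304.2554 — 2 statements merged into one kernel-verified Lean document; each statement's English description precedes it below -/
import Mathlib

section
/- Let D ⊆ ℝ^M be a compact convex set and G : ℝ^M → ℝ be C¹. Fix X in the nonnegative orthant and let P = ∇G(X)(I−R)ᵀ for a fixed M×M matrix R. If Λ(I−R)^{−1} + ε'·D̃ ∈ D, where D̃ = argmax_{D∈𝒟} ⟨P, D⟩ and ε' > 0, and if ⟨P, D̃⟩ ≥ η‖∇G(X)‖ for some η > 0, then max_{D∈𝒟} ⟨P, D⟩ ≥ ⟨∇G(X), Λ⟩ + ε'η‖∇G(X)‖. -/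
open Filter Topology

/-- The key drift inequality of Theorem 5: with pressure vector
`P = (I − R) ∇G(X)` (column form of `∇G(X)(I−R)ᵀ`), if the workload
`Λ(I−R)⁻¹` shifted by `ε' Dtil` still lies in the compact convex feasible region
`𝒟`, where `Dtil` maximizes `⟨P, ·⟩` over `𝒟`, and `⟨P, Dtil⟩ ≥ η ‖∇G(X)‖`, then
`max_{D ∈ 𝒟} ⟨P, D⟩ ≥ ⟨∇G(X), Λ⟩ + ε' η ‖∇G(X)‖`. -/
theorem stmt12 {M : ℕ} (G : (Fin M → ℝ) → ℝ) (hG : ContDiff ℝ 1 G)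
    (X : Fin M → ℝ) (hX : ∀ i, 0 ≤ X i)
    (g : Fin M → ℝ) (hg : ∀ v, fderiv ℝ G X v = dotProduct g v)
    (R : Matrix (Fin M) (Fin M) ℝ) (hR : IsUnit (1 - R))
    (𝒟 : Set (Fin M → ℝ)) (hcomp : IsCompact 𝒟) (hconv : Convex ℝ 𝒟)
    (Λ Dtil : Fin M → ℝ) (hDtil : Dtil ∈ 𝒟)
    (hmax : ∀ D ∈ 𝒟, dotProduct ((1 - R).mulVec g) D
      ≤ dotProduct ((1 - R).mulVec g) Dtil)
    (ε' η : ℝ) (hε' : 0 < ε') (hη : 0 < η)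
    (hin : (Matrix.vecMul Λ (1 - R)⁻¹ + ε' • Dtil) ∈ 𝒟)
    (hlow : η * Real.sqrt (dotProduct g g)
      ≤ dotProduct ((1 - R).mulVec g) Dtil) :
    dotProduct g Λ + ε' * η * Real.sqrt (dotProduct g g)
      ≤ dotProduct ((1 - R).mulVec g) Dtil := by
  have key := hmax _ hin
  have h1 : dotProduct ((1 - R).mulVec g) (Matrix.vecMul Λ (1 - R)⁻¹)
      = dotProduct g Λ := by
    rw [dotProduct_comm, Matrix.dotProduct_mulVec, Matrix.vecMul_vecMul,
      Matrix.nonsing_inv_mul _ ((Matrix.isUnit_iff_isUnit_det _).mp hR),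
      Matrix.vecMul_one, dotProduct_comm]
  rw [dotProduct_add, h1, dotProduct_smul, smul_eq_mul] at key
  nlinarith [mul_le_mul_of_nonneg_left hlow hε'.le]
end

section
/- Let G : ℝ^M → ℝ be C², with Hessian H_G, such that for all bounded Y and all unit rays, lim ‖H_G(X+Y)‖/‖H_G(X)‖ = 1 and lim ‖H_G(X)‖/‖∇G(X)‖ = 0 as ‖X‖ → ∞ along rays where these quantities are eventually nonzero. Then for any bounded vector Y, the second-order Taylor remainder R²(X,Y) = G(X+Y) − G(X) − ⟨∇G(X),Y⟩ satisfies R²(X,Y) = o(‖∇G(X)‖) as ‖X‖ → ∞ along rays. -/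
open Filter Topology Set

lemma taylor2_bound {E : Type*} [NormedAddCommGroup E] [NormedSpace ℝ E]
    {G : E → ℝ} (hG : ContDiff ℝ 2 G) (x y : E) {K : ℝ}
    (hK : ∀ t ∈ Icc (0:ℝ) 1, ‖iteratedFDeriv ℝ 2 G (x + t • y)‖ ≤ K) :
    ‖G (x + y) - G x - fderiv ℝ G x y‖ ≤ K * ‖y‖ * ‖y‖ := by
  set s := segment ℝ x (x + y) with hs
  have hmem : ∀ z ∈ s, ∃ t ∈ Icc (0:ℝ) 1, z = x + t • y := by
    intro z hz
    rw [hs, segment_eq_image'] at hz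
    obtain ⟨t, ht, hzt⟩ := hz
    exact ⟨t, ht, by rw [← hzt, add_sub_cancel_left]⟩
  have hd1 : ContDiff ℝ 1 (fderiv ℝ G) := hG.fderiv_right (by norm_num)
  -- bound on second derivative on s
  have bound2 : ∀ w ∈ s, ‖fderiv ℝ (fderiv ℝ G) w‖ ≤ K := by
    intro w hw
    obtain ⟨t, ht, rfl⟩ := hmem w hw
    have h1 : ‖fderiv ℝ (fderiv ℝ G) (x + t • y)‖
        ≤ ‖iteratedFDeriv ℝ 1 (fderiv ℝ G) (x + t • y)‖ := by
      apply ContinuousLinearMap.opNorm_le_bound _ (norm_nonneg _)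
      intro v
      have h2 : fderiv ℝ (fderiv ℝ G) (x + t • y) v
          = iteratedFDeriv ℝ 1 (fderiv ℝ G) (x + t • y) (fun _ => v) := by
        simp
      rw [h2]
      calc ‖iteratedFDeriv ℝ 1 (fderiv ℝ G) (x + t • y) (fun _ => v)‖
          ≤ ‖iteratedFDeriv ℝ 1 (fderiv ℝ G) (x + t • y)‖ * ∏ _i : Fin 1, ‖v‖ :=
            (iteratedFDeriv ℝ 1 (fderiv ℝ G) (x + t • y)).le_opNorm _
        _ = ‖iteratedFDeriv ℝ 1 (fderiv ℝ G) (x + t • y)‖ * ‖v‖ := by simp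
    refine h1.trans ?_
    rw [norm_iteratedFDeriv_fderiv]
    exact hK t ht
  -- step A: Lipschitz bound for fderiv G on s
  have hxs : x ∈ s := left_mem_segment ℝ x (x + y)
  have stepA : ∀ z ∈ s, ‖fderiv ℝ G z - fderiv ℝ G x‖ ≤ K * ‖y‖ := by
    intro z hz
    have := (convex_segment x (x + y)).norm_image_sub_le_of_norm_fderiv_le
      (f := fderiv ℝ G) (fun w _ => (hd1.differentiable one_ne_zero).differentiableAt)
      bound2 hxs hz
    refine this.trans ?_
    have hK0 : 0 ≤ K := le_trans (norm_nonneg _) (hK 0 ⟨le_rfl, zero_le_one⟩)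
    apply mul_le_mul_of_nonneg_left _ hK0
    obtain ⟨t, ht, rfl⟩ := hmem z hz
    rw [add_sub_cancel_left, norm_smul, Real.norm_eq_abs, abs_of_nonneg ht.1]
    exact mul_le_of_le_one_left (norm_nonneg _) ht.2
  -- step B
  have hys : x + y ∈ s := right_mem_segment ℝ x (x + y)
  have := (convex_segment x (x + y)).norm_image_sub_le_of_norm_hasFDerivWithin_le'
    (f := G) (f' := fun z => fderiv ℝ G z) (φ := fderiv ℝ G x)
    (fun z _ => ((hG.differentiable (by norm_num)) z).hasFDerivAt.hasFDerivWithinAt)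
    stepA hxs hys
  rw [add_sub_cancel_left] at this
  linarith [this]

set_option maxHeartbeats 1000000 in
/-- Property (37) of Lemma 4: if the Hessian norm of a C² function `G` is
translation-stable (`‖H(X+Y)‖/‖H(X)‖ → 1` for bounded `Y`) and negligible
compared to the gradient norm along nonnegative unit rays, then the
second-order Taylor remainder in any bounded direction is `o(‖∇G(X)‖)`
along rays. -/
theorem stmt14 {M : ℕ} (G : EuclideanSpace ℝ (Fin M) → ℝ) (hG : ContDiff ℝ 2 G)
    (hH : ∀ X₀ : EuclideanSpace ℝ (Fin M), ‖X₀‖ = 1 → (∀ i, 0 ≤ X₀ i) →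
      ∀ (Y : ℝ → EuclideanSpace ℝ (Fin M)) (C : ℝ), (∀ α, ‖Y α‖ ≤ C) →
      Tendsto (fun α : ℝ => ‖iteratedFDeriv ℝ 2 G (α • X₀ + Y α)‖ /
        ‖iteratedFDeriv ℝ 2 G (α • X₀)‖) atTop (𝓝 1))
    (hHg : ∀ X₀ : EuclideanSpace ℝ (Fin M), ‖X₀‖ = 1 → (∀ i, 0 ≤ X₀ i) →
      Tendsto (fun α : ℝ => ‖iteratedFDeriv ℝ 2 G (α • X₀)‖ / ‖gradient G (α • X₀)‖)
        atTop (𝓝 0)) :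
    ∀ X₀ : EuclideanSpace ℝ (Fin M), ‖X₀‖ = 1 → (∀ i, 0 ≤ X₀ i) →
    ∀ (Y : ℝ → EuclideanSpace ℝ (Fin M)) (C : ℝ), (∀ α, ‖Y α‖ ≤ C) →
    Tendsto (fun α : ℝ =>
      (G (α • X₀ + Y α) - G (α • X₀) - (inner ℝ (gradient G (α • X₀)) (Y α) : ℝ)) /
      ‖gradient G (α • X₀)‖) atTop (𝓝 0) := by
  intro X₀ hX₀ hX₀pos Y C hY
  have hC : 0 ≤ C := le_trans (norm_nonneg _) (hY 0)
  -- continuity of Hessian norm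
  have hcont : Continuous (fun z => ‖iteratedFDeriv ℝ 2 G z‖) :=
    (hG.continuous_iteratedFDeriv (le_refl 2)).norm
  -- choose maximizer of Hessian norm on the segment
  have hmax : ∀ α : ℝ, ∃ t ∈ Icc (0:ℝ) 1, ∀ u ∈ Icc (0:ℝ) 1,
      ‖iteratedFDeriv ℝ 2 G (α • X₀ + u • Y α)‖
        ≤ ‖iteratedFDeriv ℝ 2 G (α • X₀ + t • Y α)‖ := by
    intro α
    obtain ⟨t, ht, hmax⟩ := isCompact_Icc.exists_isMaxOn (nonempty_Icc.mpr zero_le_one)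
      ((hcont.comp (by continuity : Continuous
        (fun u : ℝ => α • X₀ + u • Y α))).continuousOn)
    exact ⟨t, ht, fun u hu => hmax hu⟩
  choose t ht hmaxt using hmax
  set Y' : ℝ → EuclideanSpace ℝ (Fin M) := fun α => t α • Y α with hY'
  have hY'C : ∀ α, ‖Y' α‖ ≤ C := by
    intro α
    rw [hY', norm_smul, Real.norm_eq_abs, abs_of_nonneg (ht α).1]
    exact le_trans (mul_le_of_le_one_left (norm_nonneg _) (ht α).2) (hY α)
  set H₀ : ℝ → ℝ := fun α => ‖iteratedFDeriv ℝ 2 G (α • X₀)‖ with hH₀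
  set S : ℝ → ℝ := fun α => ‖iteratedFDeriv ℝ 2 G (α • X₀ + Y' α)‖ with hS
  set g : ℝ → ℝ := fun α => ‖gradient G (α • X₀)‖ with hg
  have hratio : Tendsto (fun α => S α / H₀ α) atTop (𝓝 1) := hH X₀ hX₀ hX₀pos Y' C hY'C
  have hHgt : Tendsto (fun α => H₀ α / g α) atTop (𝓝 0) := hHg X₀ hX₀ hX₀pos
  -- eventually H₀ ≠ 0
  have hne : ∀ᶠ α in atTop, H₀ α ≠ 0 := by
    filter_upwards [hratio.eventually (eventually_ne_nhds one_ne_zero)] with α hα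
    intro h0
    apply hα
    simp [h0]
  -- S / g → 0
  have hSg : Tendsto (fun α => S α / g α) atTop (𝓝 0) := by
    have hmul : Tendsto (fun α => (S α / H₀ α) * (H₀ α / g α)) atTop (𝓝 (1 * 0)) :=
      hratio.mul hHgt
    rw [one_mul] at hmul
    refine hmul.congr' ?_
    filter_upwards [hne] with α hα
    rw [div_mul_div_comm, mul_comm (S α) (H₀ α), mul_div_mul_left _ _ hα]
  -- final squeeze
  have hlim : Tendsto (fun α => C * C * (S α / g α)) atTop (𝓝 0) := by
    simpa using hSg.const_mul (C * C)
  refine squeeze_zero_norm' ?_ hlim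
  filter_upwards [] with α
  -- rewrite inner product as fderiv
  have hinner : (inner ℝ (gradient G (α • X₀)) (Y α) : ℝ) = fderiv ℝ G (α • X₀) (Y α) := by
    rw [gradient]
    exact InnerProductSpace.toDual_symm_apply
  have hbound : ‖G (α • X₀ + Y α) - G (α • X₀) - fderiv ℝ G (α • X₀) (Y α)‖
      ≤ S α * ‖Y α‖ * ‖Y α‖ :=
    taylor2_bound hG (α • X₀) (Y α) (fun u hu => hmaxt α u hu)
  have hS0 : 0 ≤ S α := norm_nonneg _
  have hRC : ‖G (α • X₀ + Y α) - G (α • X₀) - fderiv ℝ G (α • X₀) (Y α)‖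
      ≤ C * C * S α := by
    refine hbound.trans ?_
    calc S α * ‖Y α‖ * ‖Y α‖ ≤ S α * C * C := by
          apply mul_le_mul (mul_le_mul_of_nonneg_left (hY α) hS0) (hY α) (norm_nonneg _)
          positivity
      _ = C * C * S α := by ring
  rw [hinner, norm_div, Real.norm_of_nonneg (norm_nonneg (gradient G (α • X₀)))]
  rcases eq_or_lt_of_le (norm_nonneg (gradient G (α • X₀))) with h0 | hpos
  · rw [← h0, div_zero]
    exact mul_nonneg (mul_nonneg hC hC) (div_nonneg hS0 (norm_nonneg (gradient G (α • X₀))))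
  · rw [← mul_div_assoc]
    exact (div_le_div_iff_of_pos_right hpos).mpr hRC
end
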